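/- Let m be a positive integer with gcd(m,q) = 1, a an integer with gcd(a,m) = 1, and C = F_q[x]·c(x) a maximal 1-generator QC code of index l generated by c(x) = (c_1(x),...,c_l(x)) ∈ (F_q[x]/(x^m−1))^l, i.e. gcd(c_1(x),...,c_l(x), x^m−1) = 1. Let a' be the residue of −a modulo m. Then C is μ_a-LCD if and only if gcd(Σ_{j=1}^l c_j(x)·c_j(x^{a'}), x^m−1) = 1 (computing c_j(x^{a'}) modulo x^m−1). -/

import Mathlib

open scoped BigOperators
open Polynomial

/-- The Euclidean dual of a linear code inside `(F[x]/(x^m - 1))^l`, each factor being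
identified with `F^m` (coordinates indexed by `ZMod m`) via coefficient vectors. -/
def qcDual {F : Type*} [Field F] {l m : ℕ} [NeZero m]
    (C : Submodule F (Fin l → ZMod m → F)) : Submodule F (Fin l → ZMod m → F) where
  carrier := {b | ∀ c ∈ C, ∑ j, ∑ i, b j i * c j i = 0}
  zero_mem' := by intro c hc; simp
  add_mem' := by
    intro x y hx hy c hc
    simp only [Set.mem_setOf_eq, Pi.add_apply, add_mul, Finset.sum_add_distrib,
      hx c hc, hy c hc, add_zero]
  smul_mem' := by
    intro r x hx c hc
    simp only [Set.mem_setOf_eq, Pi.smul_apply, smul_eq_mul, mul_assoc,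
      ← Finset.mul_sum, hx c hc, mul_zero]

/-- The coordinate permutation `μ_a` of `(F[x]/(x^m - 1))^l`, sending each component
`c_j(x)` to `c_j(x^a) mod (x^m - 1)`; on coefficient vectors the coefficient of `x^i`
of the image of `c_j` is the coefficient of `x^(a⁻¹ i)` of `c_j`. -/
def muQC {F : Type*} [Field F] (l m : ℕ) (a : ℤ) :
    (Fin l → ZMod m → F) →ₗ[F] (Fin l → ZMod m → F) where
  toFun c := fun j i => c j (((a : ZMod m))⁻¹ * i)
  map_add' := fun _ _ => rfl
  map_smul' := fun _ _ => rfl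

/-- The coefficient vector (indexed by `ZMod m`) of a polynomial of degree `< m`,
identifying `F[x]/(x^m - 1)` with `F^m`. -/
def polyToVec {F : Type*} [Field F] (m : ℕ) [NeZero m] (p : Polynomial F) : ZMod m → F :=
  fun i => p.coeff i.val

/-- The 1-generator quasi-cyclic code of index `l` generated by
`c = (c_1(x), …, c_l(x)) ∈ (F[x]/(x^m - 1))^l`. -/
def oneGenQC {F : Type*} [Field F] (m l : ℕ) [NeZero m] (c : Fin l → Polynomial F) :
    Submodule F (Fin l → ZMod m → F) :=
  Submodule.span F
    {v | ∃ p : Polynomial F, v = fun j => polyToVec m ((p * c j) % (X ^ m - 1))}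

section Aux

variable {F : Type*} [Field F] {m : ℕ} [NeZero m]

private lemma monicg : (X ^ m - 1 : F[X]).Monic := by
  have h := monic_X_pow_sub_C (1 : F) (NeZero.ne m)
  simpa using h

private lemma degg : (X ^ m - 1 : F[X]).degree = m := by
  have h := degree_X_pow_sub_C (Nat.pos_of_ne_zero (NeZero.ne m)) (1 : F)
  simpa using h

/-- `polyToVec m (· % (X^m - 1))` as a linear map. -/
noncomputable def vmL (F : Type*) [Field F] (m : ℕ) [NeZero m] :
    F[X] →ₗ[F] (ZMod m → F) where
  toFun p := polyToVec m (p % (X ^ m - 1))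
  map_add' p q := by
    funext i
    simp only [polyToVec, Pi.add_apply]
    rw [← modByMonic_eq_mod _ monicg, ← modByMonic_eq_mod _ monicg,
      ← modByMonic_eq_mod _ monicg, add_modByMonic, coeff_add]
  map_smul' r p := by
    funext i
    simp only [polyToVec, RingHom.id_apply, Pi.smul_apply, smul_eq_mul]
    rw [← modByMonic_eq_mod _ monicg, ← modByMonic_eq_mod _ monicg, smul_modByMonic,
      coeff_smul, smul_eq_mul]

lemma vmL_apply (p : F[X]) : vmL F m p = polyToVec m (p % (X ^ m - 1)) := rfl

lemma vmL_apply' (p : F[X]) (i : ZMod m) :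
    vmL F m p i = (p %ₘ (X ^ m - 1)).coeff i.val := by
  rw [vmL_apply, polyToVec, modByMonic_eq_mod _ monicg]

lemma vmL_eq_zero {p : F[X]} : vmL F m p = 0 ↔ (X ^ m - 1 : F[X]) ∣ p := by
  rw [← modByMonic_eq_zero_iff_dvd (monicg (m := m))]
  constructor
  · intro h
    ext k
    rcases lt_or_ge k m with hk | hk
    · have h2 := congrFun h ((k : ZMod m))
      rw [vmL_apply' ] at h2
      rwa [ZMod.val_cast_of_lt hk] at h2
    · refine coeff_eq_zero_of_degree_lt (lt_of_lt_of_le (degree_modByMonic_lt p monicg) ?_)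
      rw [degg]
      exact_mod_cast hk
  · intro h
    funext i
    rw [vmL_apply', h]
    simp
end Aux

section Aux2

variable {F : Type*} [Field F] {m : ℕ} [NeZero m]

lemma vmL_eq_of_dvd_sub {p q : F[X]} (h : (X ^ m - 1 : F[X]) ∣ p - q) :
    vmL F m p = vmL F m q := by
  have h2 := vmL_eq_zero.mpr h
  rw [map_sub, sub_eq_zero] at h2
  exact h2

lemma vmL_C_mul_X_pow (b : F) (r : ℕ) (i : ZMod m) :
    vmL F m (C b * X ^ r) i = if i = (r : ZMod m) then b else 0 := by
  have hm : 0 < m := Nat.pos_of_ne_zero (NeZero.ne m)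
  have h1 : vmL F m (C b * X ^ r : F[X]) = vmL F m (C b * X ^ (r % m)) := by
    apply vmL_eq_of_dvd_sub
    rw [← mul_sub]
    refine Dvd.dvd.mul_left ?_ _
    have h2 : (X ^ r - X ^ (r % m) : F[X])
        = X ^ (r % m) * ((X ^ m) ^ (r / m) - 1 ^ (r / m)) := by
      rw [one_pow, mul_sub, mul_one, ← pow_mul, ← pow_add, Nat.mod_add_div]
    rw [h2]
    exact Dvd.dvd.mul_left (sub_dvd_pow_sub_pow _ _ _) _
  rw [h1, vmL_apply']
  have hdeg : (C b * X ^ (r % m) : F[X]).degree < (X ^ m - 1 : F[X]).degree := by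
    refine lt_of_le_of_lt (degree_C_mul_X_pow_le _ _) ?_
    rw [degg]
    exact_mod_cast Nat.mod_lt _ hm
  rw [(modByMonic_eq_self_iff monicg).mpr hdeg, coeff_C_mul, coeff_X_pow]
  have hval : (i = (r : ZMod m)) ↔ (i.val = r % m) := by
    constructor
    · intro h; rw [h, ZMod.val_natCast]
    · intro h
      have h2 := congrArg (Nat.cast : ℕ → ZMod m) h
      rw [ZMod.natCast_rightInverse i, ZMod.natCast_mod] at h2
      exact h2
  by_cases hc : i = (r : ZMod m)
  · rw [if_pos hc, if_pos (hval.mp hc), mul_one]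
  · rw [if_neg hc, if_neg (fun hh => hc (hval.mpr hh)), mul_zero]

lemma vmL_mul_X_pow (p : F[X]) (s : ℕ) (i : ZMod m) :
    vmL F m (p * X ^ s) i = vmL F m p (i - (s : ZMod m)) := by
  induction p using Polynomial.induction_on' with
  | add f g hf hg =>
    rw [add_mul, map_add, map_add]
    simp [hf, hg]
  | monomial n b =>
    rw [← C_mul_X_pow_eq_monomial, mul_assoc, ← pow_add, vmL_C_mul_X_pow, vmL_C_mul_X_pow]
    have hcond : (i = ((n + s : ℕ) : ZMod m)) ↔ (i - (s : ZMod m) = (n : ZMod m)) := by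
      push_cast
      constructor
      · intro h; rw [h]; ring
      · intro h
        have : i - (s : ZMod m) + (s : ZMod m) = (n : ZMod m) + s := by rw [h]
        simpa [sub_add_cancel] using this
    exact if_congr hcond rfl rfl

lemma vmL_pairing (A : ZMod m) (a' : ℕ) (hA : ((a' : ℕ) : ZMod m) = -A) (f h : F[X]) :
    ∑ i : ZMod m, vmL F m f (A * i) * vmL F m h i
      = vmL F m (f * h.comp (X ^ a')) 0 := by
  induction f using Polynomial.induction_on' with
  | add f₁ f₂ h₁ h₂ =>
    simp only [map_add, Pi.add_apply, add_mul, Finset.sum_add_distrib, h₁, h₂]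
  | monomial r b =>
    induction h using Polynomial.induction_on' with
    | add g₁ g₂ h₁ h₂ =>
      simp only [map_add, Pi.add_apply, mul_add, add_comp, Finset.sum_add_distrib, h₁, h₂]
    | monomial t d =>
      rw [← C_mul_X_pow_eq_monomial, ← C_mul_X_pow_eq_monomial]
      have hcomp : ((C d * X ^ t : F[X])).comp (X ^ a') = C d * X ^ (a' * t) := by
        rw [mul_comp, C_comp, pow_comp, X_comp, ← pow_mul]
      rw [hcomp]
      have hprod : (C b * X ^ r) * (C d * X ^ (a' * t)) = C (b * d) * X ^ (r + a' * t) := by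
        rw [mul_mul_mul_comm, ← C_mul, ← pow_add]
      rw [hprod, vmL_C_mul_X_pow]
      have hterm : ∀ i : ZMod m,
          vmL F m (C b * X ^ r) (A * i) * vmL F m (C d * X ^ t) i
            = if i = (t : ZMod m) then
                (if A * (t : ZMod m) = (r : ZMod m) then b * d else 0) else 0 := by
        intro i
        rw [vmL_C_mul_X_pow, vmL_C_mul_X_pow]
        by_cases hi : i = (t : ZMod m)
        · subst hi
          rw [if_pos rfl, if_pos rfl]
          by_cases hc : A * (t : ZMod m) = (r : ZMod m)
          · rw [if_pos hc, if_pos hc]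
          · rw [if_neg hc, if_neg hc, zero_mul]
        · rw [if_neg hi, if_neg hi, mul_zero]
      rw [Finset.sum_congr rfl fun i _ => hterm i, Finset.sum_ite_eq' Finset.univ]
      rw [if_pos (Finset.mem_univ _)]
      have hcond : (A * (t : ZMod m) = (r : ZMod m))
          ↔ ((0 : ZMod m) = ((r + a' * t : ℕ) : ZMod m)) := by
        push_cast
        rw [hA]
        constructor
        · intro h; linear_combination h
        · intro h; linear_combination h
      exact if_congr hcond rfl rfl

lemma mem_oneGenQC {l : ℕ} (c : Fin l → F[X]) (v : Fin l → ZMod m → F) :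
    v ∈ oneGenQC m l c ↔ ∃ p : F[X], v = fun j => vmL F m (p * c j) := by
  let M : Submodule F (Fin l → ZMod m → F) :=
  { carrier := {v | ∃ p : F[X], v = fun j => vmL F m (p * c j)}
    zero_mem' := ⟨0, by funext j; rw [zero_mul, map_zero]; rfl⟩
    add_mem' := by
      rintro x y ⟨p, rfl⟩ ⟨q, rfl⟩
      exact ⟨p + q, by funext j; rw [add_mul, map_add]; rfl⟩
    smul_mem' := by
      rintro r x ⟨p, rfl⟩
      exact ⟨r • p, by funext j; rw [smul_mul_assoc, map_smul]; rfl⟩ }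
  have h1 : oneGenQC m l c = M := by
    rw [oneGenQC]
    have hs : {v : Fin l → ZMod m → F |
        ∃ p : F[X], v = fun j => polyToVec m ((p * c j) % (X ^ m - 1))} = (M : Set _) := rfl
    rw [hs, Submodule.span_eq]
  rw [h1]
  exact Iff.rfl

lemma mem_qcDual_map_iff {l : ℕ} (c : Fin l → F[X]) (aZ : ℤ) (v : Fin l → ZMod m → F) :
    v ∈ qcDual ((oneGenQC m l c).map (muQC l m aZ)) ↔
      ∀ p : F[X], ∑ j, ∑ i, v j i * vmL F m (p * c j) (((aZ : ZMod m))⁻¹ * i) = 0 := by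
  constructor
  · intro hv p
    exact hv _ ⟨fun j => vmL F m (p * c j),
      Submodule.subset_span ⟨p, rfl⟩, rfl⟩
  · intro hv d hd
    obtain ⟨e, he, rfl⟩ := hd
    induction he using Submodule.span_induction with
    | mem x hx =>
      obtain ⟨p, rfl⟩ := hx
      exact hv p
    | zero => simp [map_zero]
    | add x y hx hy ihx ihy =>
      rw [map_add]
      simp only [Pi.add_apply, mul_add, Finset.sum_add_distrib, ihx, ihy, add_zero]
    | smul r x hx ih =>
      rw [map_smul]
      simp only [Pi.smul_apply, smul_eq_mul]
      have h2 : ∀ j, ∑ i, v j i * (r * (muQC l m aZ) x j i)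
          = r * ∑ i, v j i * (muQC l m aZ) x j i := by
        intro j
        rw [Finset.mul_sum]
        exact Finset.sum_congr rfl fun i _ => by ring
      rw [Finset.sum_congr rfl fun j _ => h2 j, ← Finset.mul_sum, ih, mul_zero]

end Aux2

/-- Let `gcd(m,q) = 1`, `gcd(a,m) = 1`, `a'` the residue of `-a` mod `m`, and
`C = F_q[x]·c(x)` a maximal 1-generator QC code of index `l`, i.e.
`gcd(c_1(x), …, c_l(x), x^m - 1) = 1`.  Then `C` is `μ_a`-LCD iff
`gcd(∑ j, c_j(x) c_j(x^{a'}), x^m - 1) = 1` (computing `c_j(x^{a'})` mod `x^m - 1`). -/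
theorem maximal_oneGen_qc_mu_lcd_iff_gcd_eq_one
    {F : Type*} [Field F] [Fintype F] [DecidableEq F] {l m : ℕ} [NeZero m]
    (hmq : Nat.Coprime m (Fintype.card F))
    (a : ℤ) (ha : Int.gcd a m = 1)
    (a' : ℕ) (ha' : (a' : ℤ) = (-a) % (m : ℤ))
    (c : Fin l → Polynomial F)
    (hmax : gcd (Finset.univ.gcd c) (X ^ m - 1) = 1) :
    oneGenQC m l c ⊓ qcDual ((oneGenQC m l c).map (muQC l m a)) = ⊥ ↔
      gcd (∑ j, c j * ((c j).comp (X ^ a') % (X ^ m - 1))) (X ^ m - 1) = 1 := by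
  classical
  set g : F[X] := X ^ m - 1 with hg
  have hgm : g.Monic := monicg
  have hg0 : g ≠ 0 := hgm.ne_zero
  set A : ZMod m := ((a : ℤ) : ZMod m) with hA
  have hAunit : IsUnit A := by
    have h1 : IsUnit ((a.natAbs : ℕ) : ZMod m) :=
      (ZMod.isUnit_iff_coprime _ _).mpr ha
    rcases Int.natAbs_eq a with h | h
    · rw [hA, h, Int.cast_natCast]; exact h1
    · rw [hA, h, Int.cast_neg, Int.cast_natCast]; exact h1.neg
  have ha'A : ((a' : ℕ) : ZMod m) = -A := by
    have h1 : ((a' : ℤ) : ZMod m) = ((-a % (m : ℤ) : ℤ) : ZMod m) := by rw [ha']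
    rw [Int.cast_natCast] at h1
    rw [h1, ZMod.intCast_mod, Int.cast_neg]
  have ha'unit : IsUnit ((a' : ℕ) : ZMod m) := by rw [ha'A]; exact hAunit.neg
  set S' : F[X] := ∑ j, c j * (c j).comp (X ^ a') with hS'
  -- reindexing along multiplication by the unit A
  have hreidx : ∀ (u w : ZMod m → F),
      ∑ i, u i * w (A⁻¹ * i) = ∑ i, u (A * i) * w i := by
    intro u w
    refine (Fintype.sum_bijective (fun i : ZMod m => A * i) ?_ _ _ ?_).symm
    · refine Function.bijective_iff_has_inverse.mpr ⟨fun i => A⁻¹ * i, fun i => ?_, fun i => ?_⟩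
      · show A⁻¹ * (A * i) = i
        rw [← mul_assoc, ZMod.inv_mul_of_unit A hAunit, one_mul]
      · show A * (A⁻¹ * i) = i
        rw [← mul_assoc, ZMod.mul_inv_of_unit A hAunit, one_mul]
    · intro i
      show u (A * i) * w i = u (A * i) * w (A⁻¹ * (A * i))
      rw [← mul_assoc, ZMod.inv_mul_of_unit A hAunit, one_mul]
  -- the core pairing computation
  have hpair : ∀ p q : F[X],
      (∑ j, ∑ i, vmL F m (p * c j) i * vmL F m (q * c j) (A⁻¹ * i))
        = vmL F m (p * S' * q.comp (X ^ a')) 0 := by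
    intro p q
    have h1 : ∀ j : Fin l, ∑ i, vmL F m (p * c j) i * vmL F m (q * c j) (A⁻¹ * i)
        = vmL F m ((p * c j) * ((q * c j).comp (X ^ a'))) 0 := by
      intro j
      rw [hreidx]
      exact vmL_pairing A a' ha'A _ _
    rw [Finset.sum_congr rfl fun j _ => h1 j]
    have h2 : ∑ j, vmL F m ((p * c j) * ((q * c j).comp (X ^ a'))) 0
        = vmL F m (∑ j, (p * c j) * ((q * c j).comp (X ^ a'))) 0 := by
      simp only [map_sum, Finset.sum_apply]
    rw [h2]
    have h3 : (∑ j, (p * c j) * ((q * c j).comp (X ^ a')))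
        = p * S' * q.comp (X ^ a') := by
      rw [hS', Finset.mul_sum Finset.univ (fun j => c j * (c j).comp (X ^ a')) p,
        Finset.sum_mul Finset.univ (fun j => p * (c j * (c j).comp (X ^ a'))) (q.comp (X ^ a'))]
      refine Finset.sum_congr rfl fun j _ => ?_
      rw [mul_comp]
      ring
    rw [h3]
  -- characterize dual membership for generator-shaped vectors
  have hdual : ∀ p : F[X],
      ((fun j => vmL F m (p * c j)) ∈ qcDual ((oneGenQC m l c).map (muQC l m a))
        ↔ g ∣ p * S') := by
    intro p
    rw [mem_qcDual_map_iff]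
    constructor
    · intro hv
      have key : ∀ q : F[X], vmL F m (p * S' * q.comp (X ^ a')) 0 = 0 := by
        intro q
        rw [← hpair p q]
        exact hv q
      rw [← vmL_eq_zero (m := m)]
      funext i
      have hk := key (X ^ (((((a' : ℕ) : ZMod m))⁻¹ * (-i)).val))
      set k : ℕ := ((((a' : ℕ) : ZMod m))⁻¹ * (-i)).val with hkdef
      rw [pow_comp, X_comp, ← pow_mul, vmL_mul_X_pow] at hk
      have hcast : ((a' * k : ℕ) : ZMod m) = -i := by
        push_cast
        rw [hkdef, ZMod.natCast_rightInverse, ← mul_assoc,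
          ZMod.mul_inv_of_unit _ ha'unit, one_mul]
      rw [hcast] at hk
      simpa using hk
    · intro hdvd q
      rw [hpair p q]
      have h0 := vmL_eq_zero.mpr (Dvd.dvd.mul_right hdvd (q.comp (X ^ a')))
      exact congrFun h0 0
  -- main characterization of the intersection being trivial
  have hP : (oneGenQC m l c ⊓ qcDual ((oneGenQC m l c).map (muQC l m a)) = ⊥)
      ↔ ∀ p : F[X], g ∣ p * S' → ∀ j, g ∣ p * c j := by
    constructor
    · intro hbot p hdvd j
      have hv : (fun j => vmL F m (p * c j))
          ∈ oneGenQC m l c ⊓ qcDual ((oneGenQC m l c).map (muQC l m a)) := by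
        rw [Submodule.mem_inf]
        exact ⟨(mem_oneGenQC c _).mpr ⟨p, rfl⟩, (hdual p).mpr hdvd⟩
      have h0 := (Submodule.eq_bot_iff _).mp hbot _ hv
      have h1 : vmL F m (p * c j) = 0 := congrFun h0 j
      exact vmL_eq_zero.mp h1
    · intro hall
      rw [Submodule.eq_bot_iff]
      intro v hv
      rw [Submodule.mem_inf] at hv
      obtain ⟨hv1, hv2⟩ := hv
      obtain ⟨p, rfl⟩ := (mem_oneGenQC c v).mp hv1
      have hdvd := (hdual p).mp hv2
      funext j
      exact vmL_eq_zero.mpr (hall p hdvd j)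
  -- relate the two sums modulo g
  have hSS' : g ∣ (∑ j, c j * ((c j).comp (X ^ a') % g)) - S' := by
    rw [hS', ← Finset.sum_sub_distrib]
    refine Finset.dvd_sum fun j _ => ?_
    rw [← mul_sub]
    refine Dvd.dvd.mul_left ?_ _
    have h1 := modByMonic_add_div ((c j).comp (X ^ a')) g
    rw [← modByMonic_eq_mod _ hgm]
    exact ⟨-((c j).comp (X ^ a') /ₘ g), by linear_combination h1⟩
  have hcop : ∀ x : F[X], gcd x g = 1 ↔ IsCoprime x g := by
    intro x
    constructor
    · intro h
      exact (gcd_isUnit_iff x g).mp (h ▸ isUnit_one)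
    · intro h
      have h2 := (gcd_isUnit_iff x g).mpr h
      rw [← normalize_gcd x g]
      exact normalize_eq_one.mpr h2
  have hgoal_r : gcd (∑ j, c j * ((c j).comp (X ^ a') % g)) g = 1 ↔ IsCoprime S' g := by
    rw [hcop]
    obtain ⟨w, hw⟩ := hSS'
    constructor
    · intro h
      have h2 : S' = (∑ j, c j * ((c j).comp (X ^ a') % g)) + g * (-w) := by
        rw [mul_neg, ← hw]; ring
      rw [h2]
      exact h.add_mul_left_left (-w)
    · intro h
      have h2 : (∑ j, c j * ((c j).comp (X ^ a') % g)) = S' + g * w := by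
        rw [← hw]; ring
      rw [h2]
      exact h.add_mul_left_left w
  have hfinal : (∀ p : F[X], g ∣ p * S' → ∀ j, g ∣ p * c j) ↔ IsCoprime S' g := by
    constructor
    · intro hall
      by_contra hnc
      have hd0 : gcd S' g ≠ 0 := fun h => hg0 ((gcd_eq_zero_iff S' g).mp h).2
      have hdnu : ¬ IsUnit (gcd S' g) := fun h => hnc ((gcd_isUnit_iff _ _).mp h)
      obtain ⟨π, hπ, hπd⟩ := WfDvdMonoid.exists_irreducible_factor hdnu hd0
      have hπS' : π ∣ S' := hπd.trans (gcd_dvd_left _ _)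
      have hπg : π ∣ g := hπd.trans (gcd_dvd_right _ _)
      obtain ⟨p₀, hp₀⟩ := hπg
      have h1 : g ∣ p₀ * S' := by
        obtain ⟨s, hs⟩ := hπS'
        exact ⟨s, by rw [hp₀, hs]; ring⟩
      have h2 := hall p₀ h1
      have hp₀0 : p₀ ≠ 0 := by
        rintro rfl
        rw [mul_zero] at hp₀
        exact hg0 hp₀
      have hπc : ∀ j, π ∣ c j := by
        intro j
        obtain ⟨t, ht⟩ := h2 j
        rw [hp₀] at ht
        refine ⟨t, mul_left_cancel₀ hp₀0 ?_⟩
        rw [ht]; ring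
      have hπgcd : π ∣ gcd (Finset.univ.gcd c) g :=
        dvd_gcd (Finset.dvd_gcd fun j _ => hπc j) ⟨p₀, hp₀⟩
      rw [hmax] at hπgcd
      exact hπ.not_isUnit (isUnit_of_dvd_one hπgcd)
    · intro hco p hdvd j
      have hgp : g ∣ p := hco.symm.dvd_of_dvd_mul_right hdvd
      exact dvd_mul_of_dvd_left hgp (c j)
  rw [hP, hgoal_r]
  exact hfinal
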